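/- Let R be a ring and X a nonempty set of commuting indeterminates. Then R is right cP-Baer if and only if the polynomial ring R[X] in the indeterminates X is right cP-Baer. -/

import Mathlib

/-- A ring `S` is right 𝔠𝔓-Baer if for every idempotent `e` of `S` there exists an
idempotent `c` with `r_S(eS) = cS`. -/
def IsRightCPBaer (S : Type*) [Ring S] : Prop :=
  ∀ e : S, e * e = e → ∃ c : S, c * c = c ∧
    ∀ a : S, (∀ r : S, e * r * a = 0) ↔ ∃ r : S, a = c * r

namespace CPBaerAux

open AddMonoidAlgebra

variable {R X : Type*} [Ring R]

/-- The constant coefficient of a product is the product of constant coefficients. -/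
lemma coeff_zero_mul (f g : AddMonoidAlgebra R (X →₀ ℕ)) : (f * g).coeff 0 = f.coeff 0 * g.coeff 0 := by
  classical
  rw [AddMonoidAlgebra.coeff_mul_antidiag f g 0 {(0,0)} ?_, Finset.sum_singleton]
  intro p
  constructor
  · rintro hp; simp at hp; simp [hp]
  · intro hp; rw [Finset.mem_singleton]
    rcases add_eq_zero.mp hp with ⟨h1, h2⟩; exact Prod.ext h1 h2

/-- Constant coefficient, as a ring homomorphism. -/
def eps : AddMonoidAlgebra R (X →₀ ℕ) →+* R where
  toFun f := f.coeff 0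
  map_one' := by rw [AddMonoidAlgebra.one_def]; exact Finsupp.single_eq_same
  map_mul' := coeff_zero_mul
  map_zero' := rfl
  map_add' _ _ := rfl

/-- Total degree of a monomial exponent. -/
def deg (α : X →₀ ℕ) : ℕ := α.sum fun _ n => n

lemma deg_add (α β : X →₀ ℕ) : deg (α + β) = deg α + deg β :=
  Finsupp.sum_add_index' (fun _ => rfl) (fun _ _ _ => rfl)

lemma deg_eq_zero {α : X →₀ ℕ} (h : deg α = 0) : α = 0 := by
  ext x
  by_cases hx : x ∈ α.support
  · exact Finset.sum_eq_zero_iff.mp h x hx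
  · simpa using Finsupp.notMem_support_iff.mp hx

/-- `Ord N f` : every monomial of `f` has total degree at least `N`. -/
def Ord (N : ℕ) (f : AddMonoidAlgebra R (X →₀ ℕ)) : Prop := ∀ α ∈ f.coeff.support, N ≤ deg α

lemma ord_mul {M N : ℕ} {f g : AddMonoidAlgebra R (X →₀ ℕ)}
    (hf : Ord M f) (hg : Ord N g) : Ord (M + N) (f * g) := by
  classical
  intro α hα
  obtain ⟨β, hβ, γ, hγ, rfl⟩ := Finset.mem_add.mp (AddMonoidAlgebra.support_coeff_mul_subset f g hα)
  rw [deg_add]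
  exact Nat.add_le_add (hf _ hβ) (hg _ hγ)

lemma ord_pow {m : AddMonoidAlgebra R (X →₀ ℕ)} (hm : Ord 1 m) (N : ℕ) : Ord N (m ^ N) := by
  induction N with
  | zero => intro α hα; exact Nat.zero_le _
  | succ n ih =>
      have := ord_mul hm ih
      rw [← pow_succ'] at this
      intro α hα
      have := this α hα
      omega

lemma ord_one_of_coeff_zero {f : AddMonoidAlgebra R (X →₀ ℕ)} (h : f.coeff 0 = 0) : Ord 1 f := by
  intro α hα
  rcases Nat.eq_zero_or_pos (deg α) with h0 | h1
  · exact absurd (Finsupp.mem_support_iff.mp hα) (by rw [deg_eq_zero h0]; simp [h])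
  · exact h1

lemma eq_zero_of_forall_pow_mul {m h : AddMonoidAlgebra R (X →₀ ℕ)}
    (hm : Ord 1 m) (hh : ∀ N : ℕ, h = m ^ N * h) : h = 0 := by
  by_contra hne
  obtain ⟨α, hα⟩ := Finsupp.support_nonempty_iff.mpr (mt AddMonoidAlgebra.coeff_eq_zero.mp hne)
  have h2 : Ord (deg α + 1) h := by
    rw [hh (deg α + 1)]
    have := ord_mul (ord_pow hm (deg α + 1)) (fun β _ => Nat.zero_le (deg β) : Ord 0 h)
    simpa using this
  have := h2 α hα
  omega

/-- Key transfer lemma: if `E, F` are idempotents such that the canonical element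
`w = F*E + (1-F)*(1-E)` differs from `1` by something of positive order, then
the right annihilator of `F·S` is contained in that of `E·S`. -/
lemma ann_trans {E F p : AddMonoidAlgebra R (X →₀ ℕ)} (hE : E * E = E) (hF : F * F = F)
    (hw : Ord 1 (1 - (F * E + (1 - F) * (1 - E))))
    (hFp : ∀ q : AddMonoidAlgebra R (X →₀ ℕ), F * q * p = 0) :
    ∀ q : AddMonoidAlgebra R (X →₀ ℕ), E * q * p = 0 := by
  intro q
  set w : AddMonoidAlgebra R (X →₀ ℕ) := F * E + (1 - F) * (1 - E) with hwdef
  set m : AddMonoidAlgebra R (X →₀ ℕ) := 1 - w with hmdef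
  have h1 : (1 - E) * E = 0 := by rw [sub_mul, one_mul, hE, sub_self]
  have h2 : F * (1 - F) = 0 := by rw [mul_sub, mul_one, hF, sub_self]
  have hwE : w * E = F * w := by
    have l : w * E = F * E := by
      rw [hwdef, add_mul, mul_assoc, mul_assoc, h1, mul_zero, add_zero, hE]
    have r : F * w = F * E := by
      rw [hwdef, mul_add, ← mul_assoc, hF, ← mul_assoc, h2, zero_mul, add_zero]
    rw [l, r]
  have key : ∀ N : ℕ, E * q * p = m ^ N * (E * q * p) := by
    intro N
    have geom : (∑ i ∈ Finset.range N, m ^ i) * w = 1 - m ^ N := by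
      have h := geom_sum_mul m N
      have hw' : w = -(m - 1) := by rw [neg_sub, hmdef, sub_sub_cancel]
      rw [hw', mul_neg, h, neg_sub]
    have hone : (∑ i ∈ Finset.range N, m ^ i) * w + m ^ N = 1 := by
      rw [geom, sub_add_cancel]
    have hstep : w * (E * q * p) = F * (w * q) * p := by
      have hwE2 : w * E = F * w := hwE
      rw [← mul_assoc, ← mul_assoc, hwE2, mul_assoc F w q]
    calc E * q * p = ((∑ i ∈ Finset.range N, m ^ i) * w + m ^ N) * (E * q * p) := by
            rw [hone, one_mul]
      _ = (∑ i ∈ Finset.range N, m ^ i) * (w * (E * q * p)) + m ^ N * (E * q * p) := by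
            rw [add_mul, mul_assoc]
      _ = m ^ N * (E * q * p) := by rw [hstep, hFp (w * q), mul_zero, zero_add]
  exact eq_zero_of_forall_pow_mul hw key

/-- For an idempotent `e`, the right annihilator of `e·S` equals that of `e₀·S`
where `e₀` is the constant coefficient of `e`. -/
lemma ann_iff {e p : AddMonoidAlgebra R (X →₀ ℕ)} (he : e * e = e) :
    (∀ q : AddMonoidAlgebra R (X →₀ ℕ), e * q * p = 0) ↔
      (∀ q : AddMonoidAlgebra R (X →₀ ℕ),
        AddMonoidAlgebra.single 0 (e.coeff 0) * q * p = 0) := by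
  have hc : (e.coeff 0) * (e.coeff 0) = e.coeff 0 := by
    rw [show e.coeff 0 * e.coeff 0 = (e * e).coeff 0 from (coeff_zero_mul e e).symm, he]
  have hEs : (AddMonoidAlgebra.single (0 : X →₀ ℕ) (e.coeff 0)) *
      AddMonoidAlgebra.single 0 (e.coeff 0) = AddMonoidAlgebra.single 0 (e.coeff 0) := by
    rw [AddMonoidAlgebra.single_mul_single, add_zero, hc]
  have ordlem : ∀ E F : AddMonoidAlgebra R (X →₀ ℕ), E.coeff 0 = e.coeff 0 → F.coeff 0 = e.coeff 0 →
      Ord 1 (1 - (F * E + (1 - F) * (1 - E))) := by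
    intro E F hE0 hF0
    apply ord_one_of_coeff_zero
    have : eps (1 - (F * E + (1 - F) * (1 - E))) = 0 := by
      have hsE : eps E = e.coeff 0 := hE0
      have hsF : eps F = e.coeff 0 := hF0
      simp only [map_sub, map_add, map_mul, map_one]
      rw [hsE, hsF, hc]
      have expand : (1 - e.coeff 0) * (1 - e.coeff 0) = 1 - e.coeff 0 := by
        have h9 : (1 - e.coeff 0) * (1 - e.coeff 0) = 1 - e.coeff 0 - e.coeff 0 + e.coeff 0 * e.coeff 0 := by noncomm_ring
        rw [h9, hc]
        abel
      rw [expand]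
      abel
    exact this
  constructor
  · intro h
    exact ann_trans hEs he
      (ordlem (AddMonoidAlgebra.single 0 (e.coeff 0)) e Finsupp.single_eq_same rfl) h
  · intro h
    exact ann_trans he hEs
      (ordlem e (AddMonoidAlgebra.single 0 (e.coeff 0)) rfl Finsupp.single_eq_same) h

/-- Right annihilation by a constant idempotent is a coefficientwise condition. -/
lemma ann_const_iff (b : R) (p : AddMonoidAlgebra R (X →₀ ℕ)) :
    (∀ q : AddMonoidAlgebra R (X →₀ ℕ), AddMonoidAlgebra.single 0 b * q * p = 0) ↔
      ∀ (r : R) (γ : X →₀ ℕ), b * r * p.coeff γ = 0 := by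
  constructor
  · intro h r γ
    have h1 := h (AddMonoidAlgebra.single 0 r)
    rw [AddMonoidAlgebra.single_mul_single, add_zero] at h1
    have := Finsupp.ext_iff.mp (congrArg AddMonoidAlgebra.coeff h1) γ
    rw [AddMonoidAlgebra.coeff_single_zero_mul] at this
    exact this
  · intro h q
    induction q using AddMonoidAlgebra.induction_linear with
    | zero => rw [mul_zero, zero_mul]
    | add a b' ha hb => rw [mul_add, add_mul, ha, hb, add_zero]
    | single β r =>
        have h1 : (AddMonoidAlgebra.single (0 : X →₀ ℕ) (b * r)) * p = 0 := by
          refine AddMonoidAlgebra.ext <| Finsupp.ext fun γ => ?_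
          rw [AddMonoidAlgebra.coeff_single_zero_mul]
          exact h r γ
        have h2 : AddMonoidAlgebra.single (0 : X →₀ ℕ) b * AddMonoidAlgebra.single β r * p =
            AddMonoidAlgebra.single β (1 : R) *
              ((AddMonoidAlgebra.single (0 : X →₀ ℕ) (b * r)) * p) := by
          rw [← mul_assoc, AddMonoidAlgebra.single_mul_single,
            AddMonoidAlgebra.single_mul_single]
          simp
        rw [h2, h1, mul_zero]

end CPBaerAux

/-- For a nonempty set `X` of commuting indeterminates, `R` is right 𝔠𝔓-Baer iff the
polynomial ring `R[X]` (realized as the monoid algebra of `X →₀ ℕ` over `R`) is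
right 𝔠𝔓-Baer. -/
theorem isRightCPBaer_iff_mvPolynomial {R : Type*} [Ring R] (X : Type*) [Nonempty X] :
    IsRightCPBaer R ↔ IsRightCPBaer (AddMonoidAlgebra R (X →₀ ℕ)) := by
  open CPBaerAux in
  constructor
  · -- R cP-Baer → R[X] cP-Baer
    intro hR e he
    have he0 : (e.coeff 0) * (e.coeff 0) = e.coeff 0 := by
      rw [show e.coeff 0 * e.coeff 0 = (e * e).coeff 0 from (coeff_zero_mul e e).symm, he]
    obtain ⟨c, hc, hcr⟩ := hR (e.coeff 0) he0
    refine ⟨AddMonoidAlgebra.single 0 c, ?_, fun p => ?_⟩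
    · rw [AddMonoidAlgebra.single_mul_single, add_zero, hc]
    constructor
    · intro h
      have h2 : ∀ (r : R) (γ : X →₀ ℕ), (e.coeff 0) * r * p.coeff γ = 0 :=
        (ann_const_iff (e.coeff 0) p).mp ((ann_iff he).mp h)
      refine ⟨p, AddMonoidAlgebra.ext <| Finsupp.ext fun γ => ?_⟩
      rw [AddMonoidAlgebra.coeff_single_zero_mul]
      obtain ⟨r, hr⟩ := (hcr (p.coeff γ)).mp (fun r => h2 r γ)
      rw [hr, ← mul_assoc, hc]
    · rintro ⟨q, rfl⟩
      refine (ann_iff he).mpr ((ann_const_iff (e.coeff 0) _).mpr fun r γ => ?_)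
      rw [AddMonoidAlgebra.coeff_single_zero_mul, ← mul_assoc,
        (hcr c).mpr ⟨c, hc.symm⟩ r, zero_mul]
  · -- R[X] cP-Baer → R cP-Baer
    intro hS e he
    have hE : (AddMonoidAlgebra.single (0 : X →₀ ℕ) e) * AddMonoidAlgebra.single 0 e =
        AddMonoidAlgebra.single 0 e := by
      rw [AddMonoidAlgebra.single_mul_single, add_zero, he]
    obtain ⟨C, hC2, hC⟩ := hS (AddMonoidAlgebra.single 0 e) hE
    have hc : (C.coeff 0) * (C.coeff 0) = C.coeff 0 := by
      rw [show C.coeff 0 * C.coeff 0 = (C * C).coeff 0 from (coeff_zero_mul C C).symm, hC2]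
    refine ⟨C.coeff 0, hc, fun a => ⟨?_, ?_⟩⟩
    · intro h
      have hA : ∀ q : AddMonoidAlgebra R (X →₀ ℕ),
          AddMonoidAlgebra.single 0 e * q * AddMonoidAlgebra.single 0 a = 0 := by
        intro q
        rw [mul_assoc]
        refine AddMonoidAlgebra.ext <| Finsupp.ext fun γ => ?_
        rw [AddMonoidAlgebra.coeff_single_zero_mul, AddMonoidAlgebra.coeff_mul_single_zero,
          ← mul_assoc]
        exact h (q.coeff γ)
      obtain ⟨q, hq⟩ := (hC (AddMonoidAlgebra.single 0 a)).mp hA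
      refine ⟨q.coeff 0, ?_⟩
      have h0 := Finsupp.ext_iff.mp (congrArg AddMonoidAlgebra.coeff hq) (0 : X →₀ ℕ)
      rw [coeff_zero_mul] at h0
      rw [← h0]
      exact Finsupp.single_eq_same.symm
    · rintro ⟨r, rfl⟩ s
      have hCq : ∀ q : AddMonoidAlgebra R (X →₀ ℕ),
          AddMonoidAlgebra.single 0 e * q * C = 0 := (hC C).mpr ⟨C, hC2.symm⟩
      have h4 := hCq (AddMonoidAlgebra.single 0 s)
      rw [AddMonoidAlgebra.single_mul_single, add_zero] at h4
      have h5 := Finsupp.ext_iff.mp (congrArg AddMonoidAlgebra.coeff h4) (0 : X →₀ ℕ)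
      rw [AddMonoidAlgebra.coeff_single_zero_mul, AddMonoidAlgebra.coeff_zero, Finsupp.zero_apply] at h5
      rw [← mul_assoc, h5, zero_mul]
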